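/- Uniform initial condition for model A: let (A_n)_n be a realization of model A whose initial configuration A_0 has i.i.d. coordinates uniform on {0,1} (independent of the updates). Then for every n ∈ ℕ, P(A_{0,n}A_{1,n} ∈ {00,11}) = d_n/2, where d_n = 4^{−n} C(2n+1,n). Equivalently, for model B started from the product measure with i.i.d. coordinates uniform on {∘,•}, the density of particles at time n is d_n/2. -/

import Mathlib

open MeasureTheory ProbabilityTheory

/-!
Conventions: a configuration of model A is `x : ℤ → Bool` (`false` = 0, `true` = 1);
a configuration of model B is `y : ℤ → Bool` (`false` = ∘, `true` = •);
an update is `u : ℤ → Bool` (`true` = ↑, `false` = →).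
For each model, the initial coordinates and all the updates form one jointly
independent family of uniform Bernoulli random variables, indexed by
`ℤ ⊕ (ℤ × ℕ)`: the `Sum.inl i` coordinates give the initial configuration and the
`Sum.inr (i, n)` coordinates give the updates.
-/

/-- The local map `𝒜` of model A. -/
def modelA (x u : ℤ → Bool) : ℤ → Bool := fun i =>
  if x (i - 1) = x i then xor (x i) (u i) else x (i - 1)

/-- The local map `ℬ` of model B: the `i`-th coordinate of `ℬ(y,u)` is `•` iff
`(y_{i-1}y_i, u_{i-1}u_i) ∈ {(•∘, →⋅), (∘•, ⋅↑), (••, ↑↑), (••, →→)}`. -/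
def modelB (y u : ℤ → Bool) : ℤ → Bool := fun i =>
  match y (i - 1), y i with
  | true, false => !u (i - 1)
  | false, true => u i
  | true, true => u (i - 1) == u i
  | false, false => false

namespace P19

/-! ### Pure combinatorics -/

/-- binomial coefficient with integer lower index, zero for negative. -/
def ch (k : ℤ) (N : ℕ) : ℕ := if 0 ≤ k then N.choose k.toNat else 0

lemma ch_pascal (N : ℕ) (k : ℤ) : ch k (N + 1) = ch (k - 1) N + ch k N := by
  unfold ch
  rcases lt_trichotomy k 0 with hk | rfl | hk
  · rw [if_neg (by omega), if_neg (by omega), if_neg (by omega)]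
  · simp
  · rw [if_pos (by omega), if_pos (by omega), if_pos (by omega)]
    obtain ⟨m, rfl⟩ : ∃ m : ℕ, k = (m : ℤ) + 1 := ⟨(k - 1).toNat, by omega⟩
    rw [(by omega : ((m:ℤ) + 1).toNat = m + 1), (by omega : ((m:ℤ) + 1 - 1).toNat = m)]
    rw [Nat.choose_succ_succ]

/-- `G n w`: number of surviving `2n`-step environments for initial width `w`. -/
noncomputable def G (n w : ℕ) : ℕ := ∑ k ∈ Finset.Icc ((n : ℤ) + 1 - w) ((n : ℤ) + w), ch k (2 * n)

lemma G_zero (w : ℕ) (hw : w ≠ 0) : G 0 w = 1 := by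
  rw [G]
  have h0 : (0 : ℤ) ∈ Finset.Icc (((0:ℕ) : ℤ) + 1 - w) (((0:ℕ) : ℤ) + w) := by
    simp only [Finset.mem_Icc]; omega
  rw [← Finset.add_sum_erase _ _ h0]
  have hz : ∑ k ∈ (Finset.Icc (((0:ℕ):ℤ) + 1 - w) (((0:ℕ):ℤ) + w)).erase 0, ch k (2 * 0) = 0 := by
    apply Finset.sum_eq_zero
    intro k hk
    simp only [Finset.mem_erase, Finset.mem_Icc] at hk
    rcases lt_or_ge k 0 with h | h
    · rw [ch, if_neg (by omega)]
    · rw [ch, if_pos h]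
      exact Nat.choose_eq_zero_of_lt (by omega)
  rw [hz]
  simp [ch]

lemma G_width_zero (n : ℕ) : G n 0 = 0 := by
  have : Finset.Icc ((n : ℤ) + 1 - (0:ℕ)) ((n : ℤ) + (0:ℕ)) = ∅ := by
    apply Finset.Icc_eq_empty; push_cast; omega
  simp [G, this]

lemma sum_Icc_top (f : ℤ → ℕ) {a b : ℤ} (h : a ≤ b) :
    ∑ k ∈ Finset.Icc a b, f k = (∑ k ∈ Finset.Icc a (b - 1), f k) + f b := by
  have hins : Finset.Icc a b = insert b (Finset.Icc a (b - 1)) := by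
    ext k; simp only [Finset.mem_insert, Finset.mem_Icc]; omega
  rw [hins, Finset.sum_insert (by simp only [Finset.mem_Icc, not_and]; omega)]
  omega

lemma sum_shift (f : ℤ → ℕ) (a b c : ℤ) :
    ∑ k ∈ Finset.Icc a b, f (k - c) = ∑ k ∈ Finset.Icc (a - c) (b - c), f k := by
  have hmap : Finset.Icc a b = (Finset.Icc (a - c) (b - c)).map (addRightEmbedding c) := by
    rw [Finset.map_add_right_Icc]; congr 1 <;> ring
  rw [hmap, Finset.sum_map]
  refine Finset.sum_congr rfl fun x _ => ?_
  have : addRightEmbedding c x = x + c := rfl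
  rw [this]
  congr 1
  ring

lemma G_succ (n w : ℕ) (hw : 1 ≤ w) :
    G (n + 1) w = G n (w + 1) + 2 * G n w + G n (w - 1) := by
  have hcast : ((w - 1 : ℕ) : ℤ) = (w : ℤ) - 1 := by omega
  have key : ∀ k ∈ Finset.Icc ((n:ℤ) + 2 - w) ((n:ℤ) + 1 + w),
      ch k (2 * (n+1)) = ch (k - 2) (2*n) + (ch (k-1) (2*n) + ch (k-1) (2*n)) + ch k (2*n) := by
    intro k _
    rw [(by ring : 2 * (n + 1) = (2 * n + 1) + 1), ch_pascal, ch_pascal, ch_pascal]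
    rw [(by ring : k - 1 - 1 = k - 2)]
    ring
  have expand : G (n+1) w
      = (∑ k ∈ Finset.Icc ((n:ℤ) + 2 - w) ((n:ℤ) + 1 + w), ch (k - 2) (2*n))
        + ((∑ k ∈ Finset.Icc ((n:ℤ) + 2 - w) ((n:ℤ) + 1 + w), ch (k - 1) (2*n))
           + (∑ k ∈ Finset.Icc ((n:ℤ) + 2 - w) ((n:ℤ) + 1 + w), ch (k - 1) (2*n)))
        + (∑ k ∈ Finset.Icc ((n:ℤ) + 2 - w) ((n:ℤ) + 1 + w), ch k (2*n)) := by
    rw [G]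
    have hIcc : Finset.Icc (((n+1:ℕ)) + 1 - (w:ℤ)) (((n+1:ℕ)) + (w:ℤ))
        = Finset.Icc ((n:ℤ) + 2 - w) ((n:ℤ) + 1 + w) := by
      congr 1 <;> push_cast <;> ring
    rw [hIcc, Finset.sum_congr rfl key, Finset.sum_add_distrib, Finset.sum_add_distrib,
        Finset.sum_add_distrib]
  have hs2 : (∑ k ∈ Finset.Icc ((n:ℤ) + 2 - w) ((n:ℤ) + 1 + w), ch (k - 2) (2*n))
      = ∑ k ∈ Finset.Icc ((n:ℤ) - w) ((n:ℤ) - 1 + w), ch k (2*n) := by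
    rw [sum_shift (fun k => ch k (2*n)) _ _ 2]
    congr 1 <;> ring
  have hs1 : (∑ k ∈ Finset.Icc ((n:ℤ) + 2 - w) ((n:ℤ) + 1 + w), ch (k - 1) (2*n)) = G n w := by
    rw [sum_shift (fun k => ch k (2*n)) _ _ 1, G]
    congr 1 <;> ring
  have hup : G n (w+1) = (∑ k ∈ Finset.Icc ((n:ℤ) - w) ((n:ℤ) - 1 + w), ch k (2*n))
      + ch ((n:ℤ) + w) (2*n) + ch ((n:ℤ) + 1 + w) (2*n) := by
    have h1 : G n (w+1) = ∑ k ∈ Finset.Icc ((n:ℤ) - w) ((n:ℤ) + 1 + w), ch k (2*n) := by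
      rw [G]; congr 1 <;> push_cast <;> ring
    rw [h1, sum_Icc_top _ (by omega : (n:ℤ) - w ≤ (n:ℤ) + 1 + w),
        (by ring : (n:ℤ) + 1 + w - 1 = (n:ℤ) + w),
        sum_Icc_top _ (by omega : (n:ℤ) - w ≤ (n:ℤ) + w),
        (by ring : (n:ℤ) + w - 1 = (n:ℤ) - 1 + w)]
  have hdown : (∑ k ∈ Finset.Icc ((n:ℤ) + 2 - w) ((n:ℤ) + 1 + w), ch k (2*n))
      = G n (w-1) + ch ((n:ℤ) + w) (2*n) + ch ((n:ℤ) + 1 + w) (2*n) := by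
    rw [sum_Icc_top _ (by omega : (n:ℤ) + 2 - w ≤ (n:ℤ) + 1 + w),
        (by ring : (n:ℤ) + 1 + w - 1 = (n:ℤ) + w),
        sum_Icc_top _ (by omega : (n:ℤ) + 2 - w ≤ (n:ℤ) + w),
        (by ring : (n:ℤ) + w - 1 = (n:ℤ) - 1 + w)]
    have hG : G n (w-1) = ∑ k ∈ Finset.Icc ((n:ℤ) + 2 - w) ((n:ℤ) - 1 + w), ch k (2*n) := by
      rw [G]; congr 1 <;> rw [hcast] <;> ring
    rw [hG]
  rw [expand, hs2, hs1, hdown, hup]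
  omega

lemma G_one (n : ℕ) : G n 1 = Nat.choose (2 * n + 1) n := by
  have h : G n 1 = ch (n:ℤ) (2*n) + ch ((n:ℤ)+1) (2*n) := by
    rw [G]
    have hIcc : Finset.Icc ((n:ℤ) + 1 - (1:ℕ)) ((n:ℤ) + (1:ℕ)) = Finset.Icc ((n:ℤ)) ((n:ℤ)+1) := by
      congr 1 <;> push_cast <;> ring
    rw [hIcc, sum_Icc_top _ (by omega : (n:ℤ) ≤ (n:ℤ) + 1),
        (by ring : (n:ℤ) + 1 - 1 = (n:ℤ))]
    simp
  rw [h]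
  have h1 : ch (n:ℤ) (2*n) = Nat.choose (2*n) n := by simp [ch]
  have h2 : ch ((n:ℤ)+1) (2*n) = Nat.choose (2*n) (n+1) := by
    rw [ch, if_pos (by omega), (by omega : ((n:ℤ)+1).toNat = n+1)]
  rw [h1, h2]
  have hsym : Nat.choose (2*n+1) n = Nat.choose (2*n+1) (n+1) := by
    have := Nat.choose_symm (n := 2*n+1) (k := n+1) (by omega)
    rw [(by omega : 2*n+1 - (n+1) = n)] at this
    omega
  rw [hsym, Nat.choose_succ_succ]



instance : MeasurableSpace (ZMod 2) := ⊤
instance : MeasurableSingletonClass (ZMod 2) := ⟨fun _ => trivial⟩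

def ind (b : Bool) : ZMod 2 := if b then 1 else 0

@[simp] lemma ind_false : ind false = 0 := rfl
@[simp] lemma ind_true : ind true = 1 := rfl

/-- one backward step of the dual interval dynamics. -/
def stepI (v : ℤ → Bool) (p : ℤ × ℤ) : ℤ × ℤ :=
  if p.2 < p.1 then p
  else (if v (p.1 - 1) then p.1 else p.1 - 1, if v p.2 then p.2 else p.2 - 1)

/-- the dual interval chain: `dual u (n+1) p` applies the step with arrows `u n` first. -/
def dual (u : ℕ → ℤ → Bool) : ℕ → ℤ × ℤ → ℤ × ℤ
  | 0, p => p
  | n+1, p => dual u n (stepI (u n) p)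

/-- the linear (parity) process driven by arrows `u` from initial configuration `z`. -/
def lin (u : ℕ → ℤ → Bool) (z : ℤ → Bool) : ℕ → ℤ → Bool
  | 0 => z
  | n+1 => fun i => ((lin u z n (i-1) && !(u n (i-1))).xor (lin u z n i && u n i))

noncomputable def parSum (z : ℤ → Bool) (p : ℤ × ℤ) : ZMod 2 := ∑ i ∈ Finset.Icc p.1 p.2, ind (z i)

lemma parSum_empty (z : ℤ → Bool) (p : ℤ × ℤ) (h : p.2 < p.1) : parSum z p = 0 := by
  rw [parSum, Finset.Icc_eq_empty (by omega), Finset.sum_empty]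

lemma zsum_Icc_top (f : ℤ → ZMod 2) {a b : ℤ} (h : a ≤ b) :
    ∑ k ∈ Finset.Icc a b, f k = (∑ k ∈ Finset.Icc a (b - 1), f k) + f b := by
  have hins : Finset.Icc a b = insert b (Finset.Icc a (b - 1)) := by
    ext k; simp only [Finset.mem_insert, Finset.mem_Icc]; omega
  rw [hins, Finset.sum_insert (by simp only [Finset.mem_Icc, not_and]; omega), add_comm]

lemma zsum_Icc_bot (f : ℤ → ZMod 2) {a b : ℤ} (h : a ≤ b) :
    ∑ k ∈ Finset.Icc a b, f k = f a + (∑ k ∈ Finset.Icc (a + 1) b, f k) := by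
  have hins : Finset.Icc a b = insert a (Finset.Icc (a + 1) b) := by
    ext k; simp only [Finset.mem_insert, Finset.mem_Icc]; omega
  rw [hins, Finset.sum_insert (by simp only [Finset.mem_Icc, not_and]; omega)]

lemma zsum_shift (f : ℤ → ZMod 2) (a b : ℤ) :
    ∑ k ∈ Finset.Icc a b, f (k - 1) = ∑ k ∈ Finset.Icc (a - 1) (b - 1), f k := by
  have hmap : Finset.Icc a b = (Finset.Icc (a - 1) (b - 1)).map (addRightEmbedding 1) := by
    rw [Finset.map_add_right_Icc]; congr 1 <;> ring
  rw [hmap, Finset.sum_map]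
  refine Finset.sum_congr rfl fun x _ => ?_
  have : addRightEmbedding (1:ℤ) x = x + 1 := rfl
  rw [this]
  congr 1
  ring

lemma ind_xor (a b : Bool) : ind (a.xor b) = ind a + ind b := by
  cases a <;> cases b <;> decide

lemma ind_split (z v : Bool) : ind (z && !v) + ind (z && v) = ind z := by
  cases z <;> cases v <;> decide

/-- one-step duality for the parity sum. -/
lemma step_parSum (v z : ℤ → Bool) (p : ℤ × ℤ) :
    parSum (fun i => ((z (i-1) && !(v (i-1))).xor (z i && v i))) p = parSum z (stepI v p) := by
  rcases p with ⟨a, b⟩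
  by_cases hab : b < a
  · rw [parSum_empty _ _ hab, stepI, if_pos hab, parSum_empty _ _ hab]
  · push_neg at hab
    rw [stepI, if_neg (by simpa using hab)]
    simp only [parSum]
    have hsplit : ∀ i : ℤ, ind ((z (i-1) && !(v (i-1))).xor (z i && v i))
        = ind (z (i-1) && !(v (i-1))) + ind (z i && v i) := fun i => ind_xor _ _
    rw [Finset.sum_congr rfl (fun i _ => hsplit i), Finset.sum_add_distrib]
    have h1 : ∑ i ∈ Finset.Icc a b, ind (z (i-1) && !(v (i-1)))
        = ∑ i ∈ Finset.Icc (a-1) (b-1), ind (z i && !(v i)) := by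
      exact zsum_shift (fun i => ind (z i && !(v i))) a b
    rw [h1]
    have h2 : ∑ i ∈ Finset.Icc (a-1) (b-1), ind (z i && !(v i))
        = ind (z (a-1) && !(v (a-1))) + ∑ i ∈ Finset.Icc a (b-1), ind (z i && !(v i)) := by
      rw [zsum_Icc_bot _ (by omega : a - 1 ≤ b - 1), (by ring : a - 1 + 1 = a)]
    have h3 : ∑ i ∈ Finset.Icc a b, ind (z i && v i)
        = (∑ i ∈ Finset.Icc a (b-1), ind (z i && v i)) + ind (z b && v b) := by
      rw [zsum_Icc_top _ hab]
    rw [h2, h3]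
    have hmid : (∑ i ∈ Finset.Icc a (b-1), ind (z i && !(v i)))
        + (∑ i ∈ Finset.Icc a (b-1), ind (z i && v i))
        = ∑ i ∈ Finset.Icc a (b-1), ind (z i) := by
      rw [← Finset.sum_add_distrib]
      exact Finset.sum_congr rfl fun i _ => ind_split _ _
    -- now case on v (a-1) and v b
    rcases hva : v (a-1) <;> rcases hvb : v b
    · -- (false, false) : interval [a-1, b-1]
      norm_num
      rw [zsum_Icc_bot (fun i => ind (z i)) (by omega : a - 1 ≤ b - 1),
          (by ring : a - 1 + 1 = a), ← hmid]
      ring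
    · -- (false, true) : interval [a-1, b]
      norm_num
      rw [zsum_Icc_bot (fun i => ind (z i)) (by omega : a - 1 ≤ b),
          (by ring : a - 1 + 1 = a), zsum_Icc_top (fun i => ind (z i)) hab, ← hmid]
      ring
    · -- (true, false) : interval [a, b-1]
      norm_num
      rw [← hmid]
    · -- (true, true) : interval [a, b]
      norm_num
      rw [zsum_Icc_top (fun i => ind (z i)) hab, ← hmid]
      ring



/-- duality between the linear process and the interval chain. -/
lemma dual_parSum (u : ℕ → ℤ → Bool) (z : ℤ → Bool) :
    ∀ (n : ℕ) (p : ℤ × ℤ), parSum (lin u z n) p = parSum z (dual u n p) := by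
  intro n
  induction n with
  | zero => intro p; rfl
  | succ n ih =>
    intro p
    have hlin : lin u z (n+1) = fun i => ((lin u z n (i-1) && !(u n (i-1))).xor
        (lin u z n i && u n i)) := rfl
    rw [hlin, step_parSum (u n) (lin u z n) p, ih (stepI (u n) p)]
    rfl

lemma stepI_le (v : ℤ → Bool) (a b : ℤ) (h : a ≤ b) :
    stepI v (a, b) = (if v (a-1) then a else a - 1, if v b then b else b - 1) := by
  rw [stepI, if_neg (by simp only [not_lt]; exact h)]

lemma stepI_id (v : ℤ → Bool) (a b : ℤ) (h : b < a) : stepI v (a, b) = (a, b) := by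
  rw [stepI, if_pos (by simpa using h)]

/-- endpoints of the dual chain move down by at most one per step. -/
lemma dual_bounds (u : ℕ → ℤ → Bool) :
    ∀ (n : ℕ) (p : ℤ × ℤ), p.1 - n ≤ (dual u n p).1 ∧ (dual u n p).1 ≤ p.1 ∧
      p.2 - n ≤ (dual u n p).2 ∧ (dual u n p).2 ≤ p.2 := by
  intro n
  induction n with
  | zero => intro p; simp [dual]
  | succ n ih =>
    intro p
    obtain ⟨a, b⟩ := p
    have key : (a - 1 ≤ (stepI (u n) (a,b)).1 ∧ (stepI (u n) (a,b)).1 ≤ a) ∧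
        (b - 1 ≤ (stepI (u n) (a,b)).2 ∧ (stepI (u n) (a,b)).2 ≤ b) := by
      by_cases hab : a ≤ b
      · rw [stepI_le _ _ _ hab]
        constructor <;> constructor <;> [skip; skip; skip; skip] <;>
          · simp only []
            split <;> omega
      · rw [stepI_id _ _ _ (by omega)]
        simp only []
        omega
    have := ih (stepI (u n) (a,b))
    rw [show dual u (n+1) (a,b) = dual u n (stepI (u n) (a,b)) from rfl]
    push_cast
    omega

/-- locality: the dual chain only reads arrows in a finite window. -/
lemma dual_congr (u u' : ℕ → ℤ → Bool) :
    ∀ (n : ℕ) (a b : ℤ),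
      (∀ m, m < n → ∀ i, a - n ≤ i → i ≤ b → u m i = u' m i) →
      dual u n (a, b) = dual u' n (a, b) := by
  intro n
  induction n with
  | zero => intro a b _; rfl
  | succ n ih =>
    intro a b hagree
    rw [show dual u (n+1) (a,b) = dual u n (stepI (u n) (a,b)) from rfl,
        show dual u' (n+1) (a,b) = dual u' n (stepI (u' n) (a,b)) from rfl]
    by_cases hab : a ≤ b
    · have e1 : u n (a - 1) = u' n (a - 1) := hagree n (by omega) (a-1) (by push_cast; omega) (by omega)
      have e2 : u n b = u' n b := hagree n (by omega) b (by push_cast; omega) (by omega)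
      rw [stepI_le _ _ _ hab, stepI_le _ _ _ hab, e1, e2]
      set a' := if u' n (a-1) = true then a else a - 1 with ha'
      set b' := if u' n b = true then b else b - 1 with hb'
      have hba : a - 1 ≤ a' ∧ b' ≤ b := by
        constructor <;> [rw [ha']; rw [hb']] <;> split <;> omega
      exact ih a' b' (fun m hm i hi1 hi2 => hagree m (by omega) i (by push_cast; omega) (by omega))
    · rw [stepI_id _ _ _ (by omega), stepI_id _ _ _ (by omega)]
      exact ih a b (fun m hm i h1 h2 => hagree m (by omega) i (by push_cast at h1 ⊢; omega) h2)


/-! ### Locality infrastructure -/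

section Prob

variable {Ω : Type*} [MeasurableSpace Ω] {P : MeasureTheory.Measure Ω}
  {W : ℤ ⊕ (ℤ × ℕ) → Ω → Bool}

open MeasureTheory ProbabilityTheory
open scoped ENNReal

/-- `Loc W S F` : the random variable `F` is a function of the coordinates `W j`, `j ∈ S`. -/
def Loc (W : ℤ ⊕ (ℤ × ℕ) → Ω → Bool) (S : Finset (ℤ ⊕ ℤ × ℕ)) {γ : Type*} (F : Ω → γ) : Prop :=
  ∃ f : ((ℤ ⊕ ℤ × ℕ) → Bool) → γ,
    (∀ ω, F ω = f (fun j => W j ω)) ∧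
    ∀ c c' : (ℤ ⊕ ℤ × ℕ) → Bool, (∀ j ∈ S, c j = c' j) → f c = f c'

lemma Loc.factor {S : Finset (ℤ ⊕ ℤ × ℕ)} {γ : Type*} {F : Ω → γ} (h : Loc W S F) :
    ∃ φ : (↥S → Bool) → γ, F = fun ω => φ (fun j : ↥S => W j.1 ω) := by
  obtain ⟨f, hf, hsupp⟩ := h
  refine ⟨fun h => f (fun j => if hj : j ∈ S then h ⟨j, hj⟩ else false), funext fun ω => ?_⟩
  rw [hf ω]
  exact hsupp _ _ (fun j hj => by simp [hj])

lemma Loc.measurable (hW : ∀ j, Measurable (W j)) {S : Finset (ℤ ⊕ ℤ × ℕ)} {γ : Type*}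
    [MeasurableSpace γ] {F : Ω → γ} (h : Loc W S F) : Measurable F := by
  obtain ⟨φ, hφ⟩ := h.factor
  rw [hφ]
  exact (measurable_of_countable φ).comp (measurable_pi_lambda _ fun j => hW j)

lemma Loc.indepFun (hW : ∀ j, Measurable (W j))
    (hind : iIndepFun W P)
    {S T : Finset (ℤ ⊕ ℤ × ℕ)} {γ γ' : Type*} [MeasurableSpace γ] [MeasurableSpace γ']
    {F : Ω → γ} {G : Ω → γ'} (hF : Loc W S F) (hG : Loc W T G) (hdisj : Disjoint S T) :
    IndepFun F G P := by
  obtain ⟨φ, hφ⟩ := hF.factor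
  obtain ⟨ψ, hψ⟩ := hG.factor
  have h := (hind.indepFun_finset S T hdisj hW).comp
    (measurable_of_countable φ) (measurable_of_countable ψ)
  rw [hφ, hψ]
  exact h

lemma loc_W (j : ℤ ⊕ ℤ × ℕ) : Loc W {j} (fun ω => W j ω) :=
  ⟨fun c => c j, fun _ => rfl, fun c c' h => h j (Finset.mem_singleton_self j)⟩

lemma Loc.comp {S : Finset (ℤ ⊕ ℤ × ℕ)} {γ δ : Type*} {F : Ω → γ} (φ : γ → δ)
    (h : Loc W S F) : Loc W S (fun ω => φ (F ω)) := by
  obtain ⟨f, hf, hsupp⟩ := h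
  exact ⟨fun c => φ (f c), fun ω => congrArg φ (hf ω), fun c c' hcc => congrArg φ (hsupp c c' hcc)⟩

lemma Loc.mono {S T : Finset (ℤ ⊕ ℤ × ℕ)} {γ : Type*} {F : Ω → γ} (hST : S ⊆ T)
    (h : Loc W S F) : Loc W T F := by
  obtain ⟨f, hf, hsupp⟩ := h
  exact ⟨f, hf, fun c c' hcc => hsupp c c' (fun j hj => hcc j (hST hj))⟩

lemma Loc.prod {S T : Finset (ℤ ⊕ ℤ × ℕ)} {γ γ' : Type*} {F : Ω → γ} {G : Ω → γ'}
    (hF : Loc W S F) (hG : Loc W T G) : Loc W (S ∪ T) (fun ω => (F ω, G ω)) := by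
  obtain ⟨f, hf, hfs⟩ := hF
  obtain ⟨g, hg, hgs⟩ := hG
  refine ⟨fun c => (f c, g c), fun ω => ?_, fun c c' hcc => ?_⟩
  · show (F ω, G ω) = _
    rw [hf ω, hg ω]
  · show (f c, g c) = (f c', g c')
    rw [hfs c c' (fun j hj => hcc j (Finset.mem_union_left _ hj)),
        hgs c c' (fun j hj => hcc j (Finset.mem_union_right _ hj))]

/-- the window of arrow coordinates read by the dual chain. -/
noncomputable def win (n : ℕ) (a b : ℤ) : Finset (ℤ ⊕ ℤ × ℕ) :=
  (Finset.Icc (a - n) b ×ˢ Finset.range n).image Sum.inr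

lemma loc_dual (n : ℕ) (a b : ℤ) :
    Loc W (win n a b) (fun ω => dual (fun m i => W (Sum.inr (i, m)) ω) n (a, b)) := by
  refine ⟨fun c => dual (fun m i => c (Sum.inr (i, m))) n (a, b), fun ω => rfl,
    fun c c' hcc => ?_⟩
  apply dual_congr
  intro m hm i h1 h2
  exact hcc (Sum.inr (i, m)) (by
    rw [win, Finset.mem_image]
    exact ⟨(i, m), by simp only [Finset.mem_product, Finset.mem_Icc, Finset.mem_range]; omega, rfl⟩)

lemma parSum_congr {z z' : ℤ → Bool} (a b : ℤ) (h : ∀ i, a ≤ i → i ≤ b → z i = z' i) :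
    parSum z (a, b) = parSum z' (a, b) := by
  refine Finset.sum_congr rfl fun i hi => ?_
  rw [Finset.mem_Icc] at hi
  rw [h i hi.1 hi.2]

lemma loc_parB (a b : ℤ) :
    Loc W ((Finset.Icc a b).image Sum.inl)
      (fun ω => parSum (fun i => W (Sum.inl i) ω) (a, b)) := by
  refine ⟨fun c => parSum (fun i => c (Sum.inl i)) (a, b), fun ω => rfl, fun c c' hcc => ?_⟩
  refine parSum_congr a b fun i h1 h2 => ?_
  exact hcc (Sum.inl i) (Finset.mem_image_of_mem _ (Finset.mem_Icc.2 ⟨h1, h2⟩))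

lemma loc_parA (a b : ℤ) :
    Loc W ((Finset.Icc (a-1) b).image Sum.inl)
      (fun ω => parSum (fun i => W (Sum.inl (i-1)) ω == W (Sum.inl i) ω) (a, b)) := by
  refine ⟨fun c => parSum (fun i => c (Sum.inl (i-1)) == c (Sum.inl i)) (a, b), fun ω => rfl,
    fun c c' hcc => ?_⟩
  refine parSum_congr a b fun i h1 h2 => ?_
  have e1 : c (Sum.inl (i-1)) = c' (Sum.inl (i-1)) :=
    hcc _ (Finset.mem_image_of_mem _ (Finset.mem_Icc.2 ⟨by omega, by omega⟩))
  have e2 : c (Sum.inl i) = c' (Sum.inl i) :=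
    hcc _ (Finset.mem_image_of_mem _ (Finset.mem_Icc.2 ⟨by omega, by omega⟩))
  rw [e1, e2]

variable [IsProbabilityMeasure P]

lemma prob_W (hWmeas : ∀ j, Measurable (W j)) (hWunif : ∀ j, P {ω | W j ω = true} = 1 / 2)
    (j : ℤ ⊕ ℤ × ℕ) (c : Bool) : P {ω | W j ω = c} = 1 / 2 := by
  cases c
  · have hc : {ω | W j ω = false} = {ω | W j ω = true}ᶜ := by
      ext ω; simp
    rw [hc, measure_compl (s := {ω | W j ω = true}) ((hWmeas j) (measurableSet_singleton true))
        (measure_ne_top _ _), measure_univ, hWunif j, one_div, ENNReal.one_sub_inv_two]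
  · exact hWunif j

lemma quarter (hWmeas : ∀ j, Measurable (W j))
    (hWindep : iIndepFun W P)
    (hWunif : ∀ j, P {ω | W j ω = true} = 1 / 2)
    {j k : ℤ ⊕ ℤ × ℕ} {χ : Ω → Bool} {S : Finset (ℤ ⊕ ℤ × ℕ)}
    (hjk : j ≠ k) (hχ : Loc W S χ) (hj : j ∉ S) (hk : k ∉ S) (c1 c2 : Bool) :
    P {ω | (W j ω = c1 ∧ W k ω = c2) ∧ χ ω = true}
      = 4⁻¹ * P {ω | χ ω = true} := by
  have hpair : Loc W ({j} ∪ {k}) (fun ω => (W j ω, W k ω)) := (loc_W j).prod (loc_W k)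
  have hdisj : Disjoint ({j} ∪ {k} : Finset (ℤ ⊕ ℤ × ℕ)) S := by
    simp only [Finset.disjoint_union_left, Finset.disjoint_singleton_left]
    exact ⟨hj, hk⟩
  have hind := Loc.indepFun hWmeas hWindep hpair hχ hdisj
  have hev : {ω | (W j ω = c1 ∧ W k ω = c2) ∧ χ ω = true}
      = (fun ω => (W j ω, W k ω)) ⁻¹' {(c1, c2)} ∩ χ ⁻¹' {true} := by
    ext ω
    simp only [Set.mem_setOf_eq, Set.mem_inter_iff, Set.mem_preimage,
      Set.mem_singleton_iff, Prod.mk.injEq]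
  rw [hev, hind.measure_inter_preimage_eq_mul _ _ (measurableSet_singleton _)
    (measurableSet_singleton _)]
  have hpairind := Loc.indepFun hWmeas hWindep (loc_W j) (loc_W k)
    (by simpa [Finset.disjoint_singleton_left] using hjk)
  have h14 : P ((fun ω => (W j ω, W k ω)) ⁻¹' {(c1, c2)}) = 4⁻¹ := by
    have : ((fun ω => (W j ω, W k ω)) ⁻¹' {(c1, c2)})
        = (W j) ⁻¹' {c1} ∩ (W k) ⁻¹' {c2} := by
      ext ω; simp [Prod.ext_iff]
    rw [this, hpairind.measure_inter_preimage_eq_mul _ _ (measurableSet_singleton _)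
      (measurableSet_singleton _)]
    have e1 : (W j) ⁻¹' {c1} = {ω | W j ω = c1} := rfl
    have e2 : (W k) ⁻¹' {c2} = {ω | W k ω = c2} := rfl
    rw [e1, e2, prob_W hWmeas hWunif, prob_W hWmeas hWunif,
      (by norm_num : (1:ℝ≥0∞)/2 = 2⁻¹), ← ENNReal.mul_inv (by norm_num) (by norm_num)]
    norm_num
  rw [h14]
  rfl

lemma zmod2_cases : ∀ r : ZMod 2, r = 0 ∨ r = 1 := by decide

lemma half (hWmeas : ∀ j, Measurable (W j))
    (hWindep : iIndepFun W P)
    (hWunif : ∀ j, P {ω | W j ω = true} = 1 / 2)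
    {b : ℤ ⊕ ℤ × ℕ} {R : Ω → ZMod 2} {χ : Ω → Bool} {S : Finset (ℤ ⊕ ℤ × ℕ)}
    (hRχ : Loc W S (fun ω => (R ω, χ ω))) (hb : b ∉ S) :
    P {ω | ind (W b ω) + R ω = 1 ∧ χ ω = true} = 2⁻¹ * P {ω | χ ω = true} := by
  set Y := fun ω => (R ω, χ ω) with hY
  have hind := Loc.indepFun hWmeas hWindep (loc_W b) hRχ
    (by simpa [Finset.disjoint_singleton_left] using hb)
  have hev : {ω | ind (W b ω) + R ω = 1 ∧ χ ω = true}
      = ((W b) ⁻¹' {true} ∩ Y ⁻¹' {((0 : ZMod 2), true)})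
        ∪ ((W b) ⁻¹' {false} ∩ Y ⁻¹' {((1 : ZMod 2), true)}) := by
    ext ω
    simp only [Set.mem_setOf_eq, Set.mem_union, Set.mem_inter_iff, Set.mem_preimage,
      Set.mem_singleton_iff, hY, Prod.mk.injEq]
    rcases zmod2_cases (R ω) with hr | hr <;> rw [hr] <;> cases hX : W b ω <;>
      simp [ind] <;> decide
  have hmeasY : Measurable Y := hRχ.measurable hWmeas
  have hdisj : Disjoint ((W b) ⁻¹' {true} ∩ Y ⁻¹' {((0 : ZMod 2), true)})
      ((W b) ⁻¹' {false} ∩ Y ⁻¹' {((1 : ZMod 2), true)}) := by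
    rw [Set.disjoint_left]
    rintro ω ⟨h1, -⟩ ⟨h2, -⟩
    simp only [Set.mem_preimage, Set.mem_singleton_iff] at h1 h2
    rw [h1] at h2; exact Bool.noConfusion h2
  rw [hev, measure_union hdisj
    (((hWmeas b) (measurableSet_singleton _)).inter (hmeasY (measurableSet_singleton _)))]
  rw [hind.measure_inter_preimage_eq_mul _ _ (measurableSet_singleton _)
      (measurableSet_singleton _),
    hind.measure_inter_preimage_eq_mul _ _ (measurableSet_singleton _)
      (measurableSet_singleton _)]
  have eT : P ((W b) ⁻¹' {true}) = 2⁻¹ := by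
    rw [show ((W b) ⁻¹' {true}) = {ω | W b ω = true} from rfl, prob_W hWmeas hWunif]
    norm_num
  have eF : P ((W b) ⁻¹' {false}) = 2⁻¹ := by
    rw [show ((W b) ⁻¹' {false}) = {ω | W b ω = false} from rfl, prob_W hWmeas hWunif]
    norm_num
  rw [eT, eF, ← mul_add]
  congr 1
  have hu : Y ⁻¹' {((0 : ZMod 2), true)} ∪ Y ⁻¹' {((1 : ZMod 2), true)} = {ω | χ ω = true} := by
    ext ω
    simp only [Set.mem_union, Set.mem_preimage, Set.mem_singleton_iff, hY, Prod.mk.injEq]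
    rcases zmod2_cases (R ω) with hr | hr <;> rw [hr] <;> simp <;> decide
  have hdisj2 : Disjoint (Y ⁻¹' {((0 : ZMod 2), true)}) (Y ⁻¹' {((1 : ZMod 2), true)}) := by
    rw [Set.disjoint_left]
    intro ω h1 h2
    simp only [Set.mem_preimage, Set.mem_singleton_iff] at h1 h2
    rw [h1] at h2
    exact (by decide : ¬ (((0:ZMod 2), true) = ((1:ZMod 2), true))) h2
  rw [← hu, measure_union hdisj2 (hmeasY (measurableSet_singleton _))]

lemma dual_id_of_empty (u : ℕ → ℤ → Bool) : ∀ (n : ℕ) (a b : ℤ), b < a →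
    dual u n (a, b) = (a, b) := by
  intro n
  induction n with
  | zero => intro a b _; rfl
  | succ n ih =>
    intro a b h
    rw [show dual u (n+1) (a,b) = dual u n (stepI (u n) (a,b)) from rfl, stepI_id _ _ _ h, ih a b h]

/-- survival probability of the dual interval chain. -/
lemma chainProb (hWmeas : ∀ j, Measurable (W j))
    (hWindep : iIndepFun W P)
    (hWunif : ∀ j, P {ω | W j ω = true} = 1 / 2) :
    ∀ (n : ℕ) (a b : ℤ), a ≤ b + 1 →
    (4 : ℝ≥0∞) ^ n * P {ω | (dual (fun m i => W (Sum.inr (i, m)) ω) n (a, b)).1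
        ≤ (dual (fun m i => W (Sum.inr (i, m)) ω) n (a, b)).2}
      = (G n (b + 1 - a).toNat : ℝ≥0∞) := by
  intro n
  induction n with
  | zero =>
    intro a b hab1
    by_cases hab : a ≤ b
    · have : {ω : Ω | (dual (fun m i => W (Sum.inr (i, m)) ω) 0 (a, b)).1
          ≤ (dual (fun m i => W (Sum.inr (i, m)) ω) 0 (a, b)).2} = Set.univ := by
        ext ω; simpa [dual] using hab
      rw [this, measure_univ, pow_zero, one_mul, G_zero _ (by omega)]
      norm_num
    · have : {ω : Ω | (dual (fun m i => W (Sum.inr (i, m)) ω) 0 (a, b)).1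
          ≤ (dual (fun m i => W (Sum.inr (i, m)) ω) 0 (a, b)).2} = ∅ := by
        ext ω; simpa [dual] using (by omega : ¬ a ≤ b)
      rw [this, measure_empty, (by omega : (b + 1 - a).toNat = 0), G_width_zero]
      norm_num
  | succ n ih =>
    intro a b hab1
    by_cases hab : a ≤ b
    swap
    · have hba : b < a := by omega
      have : {ω : Ω | (dual (fun m i => W (Sum.inr (i, m)) ω) (n+1) (a, b)).1
          ≤ (dual (fun m i => W (Sum.inr (i, m)) ω) (n+1) (a, b)).2} = ∅ := by
        ext ω
        simp only [Set.mem_setOf_eq, Set.mem_empty_iff_false, iff_false]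
        rw [dual_id_of_empty _ _ _ _ hba]
        exact by omega
      rw [this, measure_empty, (by omega : (b + 1 - a).toNat = 0), G_width_zero]
      norm_num
    · -- main case
      set w : ℕ := (b + 1 - a).toNat with hw
      have hw1 : 1 ≤ w := by omega
      -- the four possible intervals after one step
      set Q : Bool → Bool → ℤ × ℤ :=
        fun c1 c2 => (if c1 then a else a - 1, if c2 then b else b - 1) with hQ
      set j : ℤ ⊕ ℤ × ℕ := Sum.inr (a - 1, n) with hj
      set k : ℤ ⊕ ℤ × ℕ := Sum.inr (b, n) with hk
      set χ : Bool → Bool → Ω → Bool := fun c1 c2 ω =>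
        decide ((dual (fun m i => W (Sum.inr (i, m)) ω) n (Q c1 c2)).1
          ≤ (dual (fun m i => W (Sum.inr (i, m)) ω) n (Q c1 c2)).2) with hχ
      have hsplitω : ∀ ω : Ω, dual (fun m i => W (Sum.inr (i, m)) ω) (n+1) (a, b)
          = dual (fun m i => W (Sum.inr (i, m)) ω) n (Q (W j ω) (W k ω)) := by
        intro ω
        rw [show dual (fun m i => W (Sum.inr (i, m)) ω) (n+1) (a,b)
            = dual (fun m i => W (Sum.inr (i, m)) ω) n
              (stepI (fun i => W (Sum.inr (i, n)) ω) (a,b)) from rfl,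
          stepI_le _ _ _ hab]
      have hlocχ : ∀ c1 c2, Loc W (win n (Q c1 c2).1 (Q c1 c2).2) (χ c1 c2) := by
        intro c1 c2
        have := (loc_dual (W := W) n (Q c1 c2).1 (Q c1 c2).2).comp
          (fun p : ℤ × ℤ => decide (p.1 ≤ p.2))
        simpa [hχ] using this
      have hnotmem : ∀ (c1 c2 : Bool) (i : ℤ), Sum.inr (i, n) ∉ win n (Q c1 c2).1 (Q c1 c2).2 := by
        intro c1 c2 i hmem
        simp only [win, Finset.mem_image] at hmem
        obtain ⟨q, hq, hqe⟩ := hmem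
        obtain rfl : q = (i, n) := Sum.inr.inj hqe
        simp only [Finset.mem_product, Finset.mem_range] at hq
        omega
      -- the decomposition of the event
      set S : Bool × Bool → Set Ω := fun v =>
        {ω | (W j ω = v.1 ∧ W k ω = v.2) ∧ χ v.1 v.2 ω = true} with hS
      have hSmeas : ∀ v : Bool × Bool, MeasurableSet (S v) := by
        intro v
        have : S v = (W j) ⁻¹' {v.1} ∩ ((W k) ⁻¹' {v.2} ∩ (χ v.1 v.2) ⁻¹' {true}) := by
          ext ω; simp [hS, and_assoc]
        rw [this]
        exact ((hWmeas j) (measurableSet_singleton _)).inter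
          (((hWmeas k) (measurableSet_singleton _)).inter
            (((hlocχ v.1 v.2).measurable hWmeas) (measurableSet_singleton _)))
      have hE : {ω : Ω | (dual (fun m i => W (Sum.inr (i, m)) ω) (n+1) (a, b)).1
          ≤ (dual (fun m i => W (Sum.inr (i, m)) ω) (n+1) (a, b)).2}
          = ⋃ v ∈ (Finset.univ : Finset (Bool × Bool)), S v := by
        ext ω
        simp only [Set.mem_setOf_eq, Set.mem_iUnion, hS, Finset.mem_univ, exists_prop,
          true_and]
        constructor
        · intro h
          refine ⟨(W j ω, W k ω), ⟨⟨rfl, rfl⟩, ?_⟩⟩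
          rw [hχ]
          simp only [decide_eq_true_iff]
          rw [← hsplitω ω]
          exact h
        · rintro ⟨v, ⟨⟨h1, h2⟩, h3⟩⟩
          rw [hχ] at h3
          simp only [decide_eq_true_iff] at h3
          rw [hsplitω ω, h1, h2]
          exact h3
      have hdisjS : (↑(Finset.univ : Finset (Bool × Bool)) : Set (Bool × Bool)).PairwiseDisjoint S := by
        intro v _ v' _ hne
        rw [Function.onFun, Set.disjoint_left]
        rintro ω ⟨⟨e1, e2⟩, -⟩ ⟨⟨e1', e2'⟩, -⟩
        refine hne ?_
        have hv : v = (W j ω, W k ω) := Prod.ext e1.symm e2.symm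
        have hv' : v' = (W j ω, W k ω) := Prod.ext e1'.symm e2'.symm
        rw [hv, hv']
      rw [hE, measure_biUnion_finset hdisjS (fun v _ => hSmeas v)]
      -- each summand
      have hjk : j ≠ k := by
        rw [hj, hk]
        intro hc
        obtain ⟨h1, -⟩ := Prod.mk.inj (Sum.inr.inj hc)
        omega
      have hterm : ∀ v : Bool × Bool, P (S v) = 4⁻¹ * P {ω | χ v.1 v.2 ω = true} := by
        intro v
        exact quarter hWmeas hWindep hWunif hjk
          (hlocχ v.1 v.2) (hnotmem v.1 v.2 (a-1)) (hnotmem v.1 v.2 b) v.1 v.2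
      have hIH : ∀ v : Bool × Bool, (4:ℝ≥0∞)^n * P {ω | χ v.1 v.2 ω = true}
          = (G n ((Q v.1 v.2).2 + 1 - (Q v.1 v.2).1).toNat : ℝ≥0∞) := by
        intro v
        have hset : {ω | χ v.1 v.2 ω = true}
            = {ω : Ω | (dual (fun m i => W (Sum.inr (i, m)) ω) n (Q v.1 v.2)).1
                ≤ (dual (fun m i => W (Sum.inr (i, m)) ω) n (Q v.1 v.2)).2} := by
          ext ω; rw [hχ]; simp [decide_eq_true_iff]
        have hle : (Q v.1 v.2).1 ≤ (Q v.1 v.2).2 + 1 := by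
          rw [hQ]; rcases v with ⟨c1, c2⟩; cases c1 <;> cases c2 <;> simp <;> omega
        have := ih (Q v.1 v.2).1 (Q v.1 v.2).2 hle
        rw [hset]
        convert this using 3 <;> rw [Prod.mk.eta]
      -- put it together
      rw [Finset.mul_sum]
      have hcomb : ∀ v : Bool × Bool, (4:ℝ≥0∞)^(n+1) * P (S v)
          = (G n ((Q v.1 v.2).2 + 1 - (Q v.1 v.2).1).toNat : ℝ≥0∞) := by
        intro v
        rw [hterm v, pow_succ, mul_assoc, ← mul_assoc (4:ℝ≥0∞) _ _,
          ENNReal.mul_inv_cancel (by norm_num) (by norm_num), one_mul, hIH v]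
      rw [Finset.sum_congr rfl (fun v _ => hcomb v)]
      rw [Fintype.sum_prod_type, Fintype.sum_bool]
      rw [Fintype.sum_bool, Fintype.sum_bool]
      have w1 : (((Q true true).2 + 1 - (Q true true).1).toNat) = w := by
        rw [hQ]; simp; omega
      have w2 : (((Q true false).2 + 1 - (Q true false).1).toNat) = w - 1 := by
        rw [hQ]; simp; omega
      have w3 : (((Q false true).2 + 1 - (Q false true).1).toNat) = w + 1 := by
        rw [hQ]; simp; omega
      have w4 : (((Q false false).2 + 1 - (Q false false).1).toNat) = w := by
        rw [hQ]; simp; omega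
      rw [w1, w2, w3, w4, G_succ n w hw1]
      push_cast
      ring

lemma ind_eq_one {b : Bool} : ind b = 1 ↔ b = true := by cases b <;> decide

lemma ind_beq (x y : Bool) : ind (x == y) = 1 + ind x + ind y := by
  cases x <;> cases y <;> decide

/-- master decomposition: conditioning on the value of the dual chain. -/
lemma master (hWmeas : ∀ j, Measurable (W j)) (n : ℕ) (j0 : ℤ) (Z : Ω → ℤ → Bool)
    (hZmeas : ∀ p : ℤ × ℤ, Measurable (fun ω => parSum (Z ω) p))
    (hhalf : ∀ p : ℤ × ℤ, p.1 ≤ p.2 →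
      P {ω | parSum (Z ω) p = 1 ∧ dual (fun m i => W (Sum.inr (i, m)) ω) n (j0, j0) = p}
        = 2⁻¹ * P {ω | dual (fun m i => W (Sum.inr (i, m)) ω) n (j0, j0) = p}) :
    P {ω | parSum (Z ω) (dual (fun m i => W (Sum.inr (i, m)) ω) n (j0, j0)) = 1}
      = 2⁻¹ * P {ω | (dual (fun m i => W (Sum.inr (i, m)) ω) n (j0, j0)).1
          ≤ (dual (fun m i => W (Sum.inr (i, m)) ω) n (j0, j0)).2} := by
  set F : Ω → ℤ × ℤ := fun ω => dual (fun m i => W (Sum.inr (i, m)) ω) n (j0, j0) with hF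
  have hFmeas : Measurable F := (loc_dual n j0 j0).measurable hWmeas
  set SB : Finset (ℤ × ℤ) := Finset.Icc (j0 - n, j0 - n) (j0, j0) with hSB
  have hFin : ∀ ω, F ω ∈ SB := by
    intro ω
    have h := dual_bounds (fun m i => W (Sum.inr (i, m)) ω) n (j0, j0)
    rw [hSB, Finset.mem_Icc]
    exact ⟨⟨h.1, h.2.2.1⟩, ⟨h.2.1, h.2.2.2⟩⟩
  -- decompose the parity event
  have hdecomp1 : {ω | parSum (Z ω) (F ω) = 1}
      = ⋃ p ∈ SB, ({ω | parSum (Z ω) p = 1} ∩ F ⁻¹' {p}) := by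
    ext ω
    simp only [Set.mem_setOf_eq, Set.mem_iUnion, Set.mem_inter_iff, Set.mem_preimage,
      Set.mem_singleton_iff, exists_prop]
    constructor
    · intro h
      exact ⟨F ω, hFin ω, h, rfl⟩
    · rintro ⟨p, -, h1, rfl⟩
      exact h1
  have hdecomp2 : {ω | (F ω).1 ≤ (F ω).2}
      = ⋃ p ∈ SB, ({ω | p.1 ≤ p.2} ∩ F ⁻¹' {p}) := by
    ext ω
    simp only [Set.mem_setOf_eq, Set.mem_iUnion, Set.mem_inter_iff, Set.mem_preimage,
      Set.mem_singleton_iff, exists_prop]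
    constructor
    · intro h
      exact ⟨F ω, hFin ω, h, rfl⟩
    · rintro ⟨p, -, h1, rfl⟩
      exact h1
  have hmeas1 : ∀ p ∈ SB, MeasurableSet ({ω | parSum (Z ω) p = 1} ∩ F ⁻¹' {p}) := by
    intro p _
    exact ((hZmeas p) (measurableSet_singleton _)).inter (hFmeas (measurableSet_singleton _))
  have hmeas2 : ∀ p ∈ SB, MeasurableSet ({ω | p.1 ≤ p.2} ∩ F ⁻¹' {p}) := by
    intro p _
    by_cases h : p.1 ≤ p.2
    · have : {ω : Ω | p.1 ≤ p.2} = Set.univ := by ext ω; simpa using h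
      rw [this, Set.univ_inter]
      exact hFmeas (measurableSet_singleton _)
    · have : {ω : Ω | p.1 ≤ p.2} = ∅ := by ext ω; simpa using h
      rw [this, Set.empty_inter]
      exact MeasurableSet.empty
  have hdisj1 : (↑SB : Set (ℤ × ℤ)).PairwiseDisjoint
      (fun p => {ω | parSum (Z ω) p = 1} ∩ F ⁻¹' {p}) := by
    intro p _ p' _ hne
    rw [Function.onFun, Set.disjoint_left]
    rintro ω ⟨-, h2⟩ ⟨-, h2'⟩
    simp only [Set.mem_preimage, Set.mem_singleton_iff] at h2 h2'
    exact hne (h2 ▸ h2')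
  have hdisj2 : (↑SB : Set (ℤ × ℤ)).PairwiseDisjoint
      (fun p => {ω | p.1 ≤ p.2} ∩ F ⁻¹' {p}) := by
    intro p _ p' _ hne
    rw [Function.onFun, Set.disjoint_left]
    rintro ω ⟨-, h2⟩ ⟨-, h2'⟩
    simp only [Set.mem_preimage, Set.mem_singleton_iff] at h2 h2'
    exact hne (h2 ▸ h2')
  rw [hdecomp1, hdecomp2, measure_biUnion_finset hdisj1 hmeas1,
    measure_biUnion_finset hdisj2 hmeas2, Finset.mul_sum]
  refine Finset.sum_congr rfl fun p _ => ?_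
  by_cases hp : p.1 ≤ p.2
  · have e1 : {ω | parSum (Z ω) p = 1} ∩ F ⁻¹' {p}
        = {ω | parSum (Z ω) p = 1 ∧ F ω = p} := by
      ext ω; simp [Set.mem_inter_iff]
    have e2 : {ω : Ω | p.1 ≤ p.2} ∩ F ⁻¹' {p} = {ω | F ω = p} := by
      ext ω; simp [Set.mem_inter_iff]; intro _; exact hp
    rw [e1, e2]
    exact hhalf p hp
  · have e1 : {ω | parSum (Z ω) p = 1} ∩ F ⁻¹' {p} = ∅ := by
      ext ω
      simp only [Set.mem_inter_iff, Set.mem_setOf_eq, Set.mem_empty_iff_false, iff_false]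
      rintro ⟨h1, -⟩
      rw [parSum_empty _ _ (by omega)] at h1
      exact (by decide : ¬ ((0 : ZMod 2) = 1)) h1
    have e2 : {ω : Ω | p.1 ≤ p.2} ∩ F ⁻¹' {p} = ∅ := by
      ext ω
      simp only [Set.mem_inter_iff, Set.mem_setOf_eq, Set.mem_empty_iff_false, iff_false]
      rintro ⟨h1, -⟩
      exact hp h1
    rw [e1, e2]
    simp

/-- fairness of the initial parity, model B. -/
lemma fairB (hWmeas : ∀ j, Measurable (W j))
    (hWindep : iIndepFun W P)
    (hWunif : ∀ j, P {ω | W j ω = true} = 1 / 2)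
    (n : ℕ) (j0 : ℤ) (p : ℤ × ℤ) (hp : p.1 ≤ p.2) :
    P {ω | parSum (fun i => W (Sum.inl i) ω) p = 1
        ∧ dual (fun m i => W (Sum.inr (i, m)) ω) n (j0, j0) = p}
      = 2⁻¹ * P {ω | dual (fun m i => W (Sum.inr (i, m)) ω) n (j0, j0) = p} := by
  obtain ⟨a, b⟩ := p
  simp only at hp
  set χ : Ω → Bool := fun ω =>
    decide (dual (fun m i => W (Sum.inr (i, m)) ω) n (j0, j0) = (a, b)) with hχ
  set R : Ω → ZMod 2 := fun ω => parSum (fun i => W (Sum.inl i) ω) (a, b - 1) with hR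
  have hloc : Loc W (((Finset.Icc a (b-1)).image Sum.inl) ∪ win n j0 j0)
      (fun ω => (R ω, χ ω)) :=
    (loc_parB a (b-1)).prod ((loc_dual n j0 j0).comp (fun q : ℤ × ℤ => decide (q = (a, b))))
  have hbnot : (Sum.inl b : ℤ ⊕ ℤ × ℕ) ∉ ((Finset.Icc a (b-1)).image Sum.inl) ∪ win n j0 j0 := by
    intro hmem
    rw [Finset.mem_union] at hmem
    rcases hmem with h | h
    · rw [Finset.mem_image] at h
      obtain ⟨q, hq, hqe⟩ := h
      obtain rfl : q = b := Sum.inl.inj hqe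
      rw [Finset.mem_Icc] at hq
      omega
    · simp only [win, Finset.mem_image] at h
      obtain ⟨q, -, hqe⟩ := h
      simp at hqe
  have hkey := half hWmeas hWindep hWunif hloc hbnot
  have hps : ∀ ω : Ω, parSum (fun i => W (Sum.inl i) ω) (a, b)
      = ind (W (Sum.inl b) ω) + R ω := by
    intro ω
    rw [hR]
    show (∑ i ∈ Finset.Icc a b, ind (W (Sum.inl i) ω)) = _
    rw [zsum_Icc_top _ hp, add_comm]
    rfl
  have hsets : {ω | parSum (fun i => W (Sum.inl i) ω) (a, b) = 1
      ∧ dual (fun m i => W (Sum.inr (i, m)) ω) n (j0, j0) = (a, b)}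
      = {ω | ind (W (Sum.inl b) ω) + R ω = 1 ∧ χ ω = true} := by
    ext ω
    rw [Set.mem_setOf_eq, Set.mem_setOf_eq, hps ω, hχ]
    simp [decide_eq_true_iff]
  have hsets2 : {ω | χ ω = true}
      = {ω | dual (fun m i => W (Sum.inr (i, m)) ω) n (j0, j0) = (a, b)} := by
    ext ω
    rw [hχ]
    simp [decide_eq_true_iff]
  rw [hsets, hkey, hsets2]

/-- fairness of the initial parity, model A. -/
lemma fairA (hWmeas : ∀ j, Measurable (W j))
    (hWindep : iIndepFun W P)
    (hWunif : ∀ j, P {ω | W j ω = true} = 1 / 2)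
    (n : ℕ) (j0 : ℤ) (p : ℤ × ℤ) (hp : p.1 ≤ p.2) :
    P {ω | parSum (fun i => (W (Sum.inl (i-1)) ω == W (Sum.inl i) ω)) p = 1
        ∧ dual (fun m i => W (Sum.inr (i, m)) ω) n (j0, j0) = p}
      = 2⁻¹ * P {ω | dual (fun m i => W (Sum.inr (i, m)) ω) n (j0, j0) = p} := by
  obtain ⟨a, b⟩ := p
  simp only at hp
  set χ : Ω → Bool := fun ω =>
    decide (dual (fun m i => W (Sum.inr (i, m)) ω) n (j0, j0) = (a, b)) with hχ
  set R : Ω → ZMod 2 := fun ω =>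
    parSum (fun i => (W (Sum.inl (i-1)) ω == W (Sum.inl i) ω)) (a, b - 1)
      + 1 + ind (W (Sum.inl (b-1)) ω) with hR
  have hloc : Loc W ((((Finset.Icc (a-1) (b-1)).image Sum.inl) ∪ {Sum.inl (b-1)}) ∪ win n j0 j0)
      (fun ω => (R ω, χ ω)) := by
    have h1 := ((loc_parA (W := W) a (b-1)).prod (loc_W (W := W) (Sum.inl (b-1)))).comp
      (fun q : ZMod 2 × Bool => q.1 + 1 + ind q.2)
    exact (Loc.prod h1 ((loc_dual n j0 j0).comp (fun q : ℤ × ℤ => decide (q = (a, b)))))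
  have hbnot : (Sum.inl b : ℤ ⊕ ℤ × ℕ)
      ∉ (((Finset.Icc (a-1) (b-1)).image Sum.inl) ∪ {Sum.inl (b-1)}) ∪ win n j0 j0 := by
    intro hmem
    rw [Finset.mem_union, Finset.mem_union] at hmem
    rcases hmem with (h | h) | h
    · rw [Finset.mem_image] at h
      obtain ⟨q, hq, hqe⟩ := h
      obtain rfl : q = b := Sum.inl.inj hqe
      rw [Finset.mem_Icc] at hq
      omega
    · rw [Finset.mem_singleton] at h
      have := Sum.inl.inj h
      omega
    · simp only [win, Finset.mem_image] at h
      obtain ⟨q, -, hqe⟩ := h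
      simp at hqe
  have hkey := half hWmeas hWindep hWunif hloc hbnot
  have hps : ∀ ω : Ω, parSum (fun i => (W (Sum.inl (i-1)) ω == W (Sum.inl i) ω)) (a, b)
      = ind (W (Sum.inl b) ω) + R ω := by
    intro ω
    rw [hR]
    show (∑ i ∈ Finset.Icc a b, ind ((W (Sum.inl (i-1)) ω == W (Sum.inl i) ω))) = _
    rw [zsum_Icc_top _ hp, ind_beq]
    show parSum (fun i => (W (Sum.inl (i-1)) ω == W (Sum.inl i) ω)) (a, b-1) + _ = _
    ring
  have hsets : {ω | parSum (fun i => (W (Sum.inl (i-1)) ω == W (Sum.inl i) ω)) (a, b) = 1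
      ∧ dual (fun m i => W (Sum.inr (i, m)) ω) n (j0, j0) = (a, b)}
      = {ω | ind (W (Sum.inl b) ω) + R ω = 1 ∧ χ ω = true} := by
    ext ω
    rw [Set.mem_setOf_eq, Set.mem_setOf_eq, hps ω, hχ]
    simp [decide_eq_true_iff]
  have hsets2 : {ω | χ ω = true}
      = {ω | dual (fun m i => W (Sum.inr (i, m)) ω) n (j0, j0) = (a, b)} := by
    ext ω
    rw [hχ]
    simp [decide_eq_true_iff]
  rw [hsets, hkey, hsets2]

lemma parSum_single (z : ℤ → Bool) (j : ℤ) : parSum z (j, j) = ind (z j) := by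
  show (∑ i ∈ Finset.Icc j j, ind (z i)) = ind (z j)
  rw [Finset.Icc_self, Finset.sum_singleton]

lemma stepB (y u : ℤ → Bool) (i : ℤ) :
    modelB y u i = ((y (i-1) && !(u (i-1))).xor (y i && u i)) := by
  rw [modelB]
  cases hy1 : y (i-1) <;> cases hy0 : y i <;> cases hu1 : u (i-1) <;> cases hu0 : u i <;> rfl

lemma stepA (x u : ℤ → Bool) (i : ℤ) :
    (modelA x u (i-1) == modelA x u i)
      = ((x (i-1-1) == x (i-1)) && !(u (i-1))).xor ((x (i-1) == x i) && u i) := by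
  simp only [modelA]
  generalize x (i-1-1) = b1
  generalize x (i-1) = b2
  generalize x i = b3
  generalize u (i-1) = c1
  generalize u i = c2
  cases b1 <;> cases b2 <;> cases b3 <;> cases c1 <;> cases c2 <;> rfl

lemma repB {Y : ℕ → Ω → ℤ → Bool}
    (hY0 : ∀ ω i, Y 0 ω i = W (Sum.inl i) ω)
    (hY : ∀ n ω, Y (n + 1) ω = modelB (Y n ω) (fun i => W (Sum.inr (i, n)) ω)) :
    ∀ (n : ℕ) (ω : Ω) (i : ℤ),
      Y n ω i = lin (fun m j => W (Sum.inr (j, m)) ω) (fun j => W (Sum.inl j) ω) n i := by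
  intro n
  induction n with
  | zero => intro ω i; exact hY0 ω i
  | succ n ih =>
    intro ω i
    rw [hY n ω, stepB, ih ω (i-1), ih ω i]
    rfl

lemma repA {A : ℕ → Ω → ℤ → Bool}
    (hA0 : ∀ ω i, A 0 ω i = W (Sum.inl i) ω)
    (hA : ∀ n ω, A (n + 1) ω = modelA (A n ω) (fun i => W (Sum.inr (i, n)) ω)) :
    ∀ (n : ℕ) (ω : Ω) (i : ℤ),
      (A n ω (i-1) == A n ω i)
        = lin (fun m j => W (Sum.inr (j, m)) ω)
            (fun j => (W (Sum.inl (j-1)) ω == W (Sum.inl j) ω)) n i := by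
  intro n
  induction n with
  | zero => intro ω i; rw [hA0 ω (i-1), hA0 ω i]; rfl
  | succ n ih =>
    intro ω i
    rw [hA n ω, stepA, ih ω (i-1), ih ω i]
    rfl

/-- the common computation for either model. -/
lemma final_arith {C S : ℝ≥0∞} (n : ℕ) (h : (4:ℝ≥0∞)^n * S = C) :
    2⁻¹ * S = C / (2 * 4 ^ n) := by
  have h40 : ((4:ℝ≥0∞)^n) ≠ 0 := pow_ne_zero _ (by norm_num)
  have h4t : ((4:ℝ≥0∞)^n) ≠ ⊤ := by
    exact ENNReal.pow_ne_top (by norm_num)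
  calc 2⁻¹ * S = 2⁻¹ * S * ((4:ℝ≥0∞)^n * ((4:ℝ≥0∞)^n)⁻¹) := by
        rw [ENNReal.mul_inv_cancel h40 h4t, mul_one]
    _ = ((4:ℝ≥0∞)^n * S) * (2⁻¹ * ((4:ℝ≥0∞)^n)⁻¹) := by ring
    _ = C * ((2:ℝ≥0∞) * 4^n)⁻¹ := by
        rw [h, ENNReal.mul_inv (Or.inl (by norm_num)) (Or.inl (by norm_num))]
    _ = C / (2 * 4 ^ n) := (div_eq_mul_inv _ _).symm

end Prob

end P19

/-- for the realization of model A whose initial configuration has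
i.i.d. coordinates uniform on `{0,1}`, independent of the i.i.d. uniform updates, one
has `P(A_{0,n} A_{1,n} ∈ {00,11}) = d_n / 2` where `d_n = 4^{-n} C(2n+1,n)`;
equivalently, for model B started from the product measure with i.i.d. coordinates
uniform on `{∘,•}`, the density of particles at time `n` is `d_n / 2`. -/
theorem modelA_modelB_uniform_start {Ω : Type*} [MeasurableSpace Ω] (P : Measure Ω)
    [IsProbabilityMeasure P]
    -- the driving i.i.d. family for model A
    (W : ℤ ⊕ (ℤ × ℕ) → Ω → Bool) (hWmeas : ∀ j, Measurable (W j))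
    (hWindep : iIndepFun W P)
    (hWunif : ∀ j, P {ω | W j ω = true} = 1 / 2)
    (A : ℕ → Ω → ℤ → Bool) (hA0 : ∀ ω i, A 0 ω i = W (Sum.inl i) ω)
    (hA : ∀ n ω, A (n + 1) ω = modelA (A n ω) (fun i => W (Sum.inr (i, n)) ω))
    -- the driving i.i.d. family for model B
    (W' : ℤ ⊕ (ℤ × ℕ) → Ω → Bool) (hW'meas : ∀ j, Measurable (W' j))
    (hW'indep : iIndepFun W' P)
    (hW'unif : ∀ j, P {ω | W' j ω = true} = 1 / 2)
    (Y : ℕ → Ω → ℤ → Bool) (hY0 : ∀ ω i, Y 0 ω i = W' (Sum.inl i) ω)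
    (hY : ∀ n ω, Y (n + 1) ω = modelB (Y n ω) (fun i => W' (Sum.inr (i, n)) ω))
    (n : ℕ) :
    P {ω | A n ω 0 = A n ω 1} = (Nat.choose (2 * n + 1) n : ENNReal) / (2 * 4 ^ n) ∧
    P {ω | Y n ω 0 = true} = (Nat.choose (2 * n + 1) n : ENNReal) / (2 * 4 ^ n) := by

  open P19 in
  constructor
  · -- model A
    have hrep := P19.repA (W := W) hA0 hA
    have hev : {ω | A n ω 0 = A n ω 1}
        = {ω | P19.parSum (fun i => (W (Sum.inl (i-1)) ω == W (Sum.inl i) ω))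
            (P19.dual (fun m i => W (Sum.inr (i, m)) ω) n (1, 1)) = 1} := by
      ext ω
      rw [Set.mem_setOf_eq, Set.mem_setOf_eq, ← P19.dual_parSum, P19.parSum_single,
        P19.ind_eq_one, ← hrep n ω 1]
      have h10 : (1:ℤ) - 1 = 0 := by norm_num
      rw [h10, beq_iff_eq]
    rw [hev]
    have hmaster := P19.master (W := W) (P := P) hWmeas n 1
      (fun ω i => (W (Sum.inl (i-1)) ω == W (Sum.inl i) ω))
      (by
        rintro ⟨a, b⟩
        exact (P19.loc_parA (W := W) a b).measurable hWmeas)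
      (fun p hp => P19.fairA hWmeas hWindep hWunif n 1 p hp)
    rw [hmaster]
    exact P19.final_arith n (P19.G_one n ▸ P19.chainProb hWmeas hWindep hWunif n 1 1 (by omega))
  · -- model B
    have hrep := P19.repB (W := W') hY0 hY
    have hev : {ω | Y n ω 0 = true}
        = {ω | P19.parSum (fun i => W' (Sum.inl i) ω)
            (P19.dual (fun m i => W' (Sum.inr (i, m)) ω) n (0, 0)) = 1} := by
      ext ω
      rw [Set.mem_setOf_eq, Set.mem_setOf_eq, ← P19.dual_parSum, P19.parSum_single,
        P19.ind_eq_one, ← hrep n ω 0]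
    rw [hev]
    have hmaster := P19.master (W := W') (P := P) hW'meas n 0
      (fun ω i => W' (Sum.inl i) ω)
      (by
        rintro ⟨a, b⟩
        exact (P19.loc_parB (W := W') a b).measurable hW'meas)
      (fun p hp => P19.fairB hW'meas hW'indep hW'unif n 0 p hp)
    rw [hmaster]
    exact P19.final_arith n (P19.G_one n ▸ P19.chainProb hW'meas hW'indep hW'unif n 0 0 (by omega))
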